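/- Under the stated hypotheses (Kantorovich), there exists a point x* with P(x*) = 0 such that ‖x* − x₀‖ ≤ 2η and, with x₁ = x₀ − [P'(x₀)]⁻¹ P(x₀) denoting the first Newton iterate, ‖x* − x₁‖ ≤ 2 η h. -/

import Mathlib

/-- Iteration of a self-map, auxiliary for the Kantorovich theorem. -/
private def kantIter {X : Type*} (T : X → X) (x₀ : X) : ℕ → X
  | 0 => x₀
  | n + 1 => T (kantIter T x₀ n)

private theorem kantIter_zero {X : Type*} (T : X → X) (x₀ : X) :
    kantIter T x₀ 0 = x₀ := rfl

private theorem kantIter_succ {X : Type*} (T : X → X) (x₀ : X) (n : ℕ) :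
    kantIter T x₀ (n + 1) = T (kantIter T x₀ n) := rfl

/-- Quadratic majorant sequence, auxiliary for the Kantorovich theorem. -/
private noncomputable def kantMaj (η c : ℝ) : ℕ → ℝ
  | 0 => 0
  | n + 1 => η + c * (kantMaj η c n) ^ 2 / 2

private theorem kantMaj_zero (η c : ℝ) : kantMaj η c 0 = 0 := rfl

private theorem kantMaj_succ (η c : ℝ) (n : ℕ) :
    kantMaj η c (n + 1) = η + c * (kantMaj η c n) ^ 2 / 2 := rfl

set_option maxHeartbeats 1000000 in
/-- Under the Kantorovich hypotheses, there is a zero `x*` of `P` in the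
closed ball of radius `2η` around `x₀`, and `x*` lies within distance `2ηh`
of the first Newton iterate `x₁ = x₀ − [P'(x₀)]⁻¹ P(x₀)`. -/
theorem kantorovich_first_iterate
    {X Y : Type*} [NormedAddCommGroup X] [NormedSpace ℝ X] [CompleteSpace X]
    [NormedAddCommGroup Y] [NormedSpace ℝ Y] [CompleteSpace Y]
    (P : X → Y) (P' : X → X →L[ℝ] Y)
    (D₀ : Set X) (hD₀open : IsOpen D₀) (hD₀conv : Convex ℝ D₀)
    (x₀ : X) (hx₀ : x₀ ∈ D₀)
    (hderiv : ∀ x ∈ D₀, HasFDerivAt P (P' x) x)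
    (B K η h : ℝ)
    (inv₀ : Y →L[ℝ] X)
    (hinv₀l : inv₀.comp (P' x₀) = ContinuousLinearMap.id ℝ X)
    (hinv₀r : (P' x₀).comp inv₀ = ContinuousLinearMap.id ℝ Y)
    (hB : ‖inv₀‖ ≤ B)
    (hη : ‖inv₀ (P x₀)‖ ≤ η)
    (hK : ∀ x ∈ D₀, ∀ y ∈ D₀, ‖P' x - P' y‖ ≤ K * ‖x - y‖)
    (hh : h = B * K * η) (hpos : 0 < h) (hhalf : h ≤ 1 / 2)
    (hball : Metric.closedBall x₀ (2 * η) ⊆ D₀) :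
    ∃ xs : X, P xs = 0 ∧ ‖xs - x₀‖ ≤ 2 * η ∧
      ‖xs - (x₀ - inv₀ (P x₀))‖ ≤ 2 * η * h := by
  have hch : (B * K) * η = h := by rw [hh]
  have hη0 : 0 ≤ η := le_trans (norm_nonneg _) hη
  have hB0 : 0 ≤ B := le_trans (norm_nonneg _) hB
  have hcpos : 0 < B * K := by nlinarith
  have hηpos : 0 < η := by nlinarith
  have hK0 : 0 ≤ K := by nlinarith
  have hinvl : ∀ w : X, inv₀ ((P' x₀) w) = w := by
    intro w
    have := congrArg (fun L : X →L[ℝ] X => L w) hinv₀l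
    simpa using this
  have hinvr : ∀ y : Y, (P' x₀) (inv₀ y) = y := by
    intro y
    have := congrArg (fun L : Y →L[ℝ] Y => L y) hinv₀r
    simpa using this
  -- the key mean-value estimate for the chord map
  have key : ∀ u v : X, u ∈ Metric.closedBall x₀ (2 * η) →
      v ∈ Metric.closedBall x₀ (2 * η) →
      ‖(u - inv₀ (P u)) - (v - inv₀ (P v))‖ ≤
        (B * K) * ((‖v - x₀‖ + ‖u - x₀‖) / 2) * ‖u - v‖ := by
    intro u v hu hv
    have huD : ‖u - x₀‖ ≤ 2 * η := by
      simpa [dist_eq_norm] using Metric.mem_closedBall.mp hu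
    have hvD : ‖v - x₀‖ ≤ 2 * η := by
      simpa [dist_eq_norm] using Metric.mem_closedBall.mp hv
    set α : ℝ := ‖v - x₀‖ with hα
    set β : ℝ := ‖u - x₀‖ with hβ
    set d : ℝ := ‖u - v‖ with hd
    set ℓ : ℝ → X := fun s => v + s • (u - v) with hℓ
    have hnorm : ∀ s ∈ Set.Icc (0:ℝ) 1, ‖ℓ s - x₀‖ ≤ (1 - s) * α + s * β := by
      intro s hs
      have hrw : ℓ s - x₀ = (1 - s) • (v - x₀) + s • (u - x₀) := by
        simp only [hℓ]
        module
      calc ‖ℓ s - x₀‖ = ‖(1 - s) • (v - x₀) + s • (u - x₀)‖ := by rw [hrw]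
        _ ≤ ‖(1 - s) • (v - x₀)‖ + ‖s • (u - x₀)‖ := norm_add_le _ _
        _ = (1 - s) * α + s * β := by
            rw [norm_smul, norm_smul, Real.norm_eq_abs, Real.norm_eq_abs,
              abs_of_nonneg (by linarith [hs.2]), abs_of_nonneg hs.1]
    have hmem : ∀ s ∈ Set.Icc (0:ℝ) 1, ℓ s ∈ Metric.closedBall x₀ (2 * η) := by
      intro s hs
      have h1 := hnorm s hs
      have : (1 - s) * α + s * β ≤ 2 * η := by nlinarith [hs.1, hs.2]
      exact Metric.mem_closedBall.mpr (by rw [dist_eq_norm]; linarith)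
    have hmemD : ∀ s ∈ Set.Icc (0:ℝ) 1, ℓ s ∈ D₀ := fun s hs => hball (hmem s hs)
    set g : ℝ → X := fun s => ℓ s - inv₀ (P (ℓ s)) - (v - inv₀ (P v)) with hg
    set g' : ℝ → X := fun s => (u - v) - inv₀ ((P' (ℓ s)) (u - v)) with hg'
    have hgd : ∀ s ∈ Set.Icc (0:ℝ) 1, HasDerivAt g (g' s) s := by
      intro s hs
      have hl : HasDerivAt ℓ (u - v) s := by
        exact (((hasDerivAt_id s).smul_const (u - v)).const_add v).congr_deriv (one_smul _ _)
      have hP : HasDerivAt (fun s => P (ℓ s)) ((P' (ℓ s)) (u - v)) s :=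
        (hderiv (ℓ s) (hmemD s hs)).comp_hasDerivAt s hl
      have hiP : HasDerivAt (fun s => inv₀ (P (ℓ s))) (inv₀ ((P' (ℓ s)) (u - v))) s :=
        inv₀.hasFDerivAt.comp_hasDerivAt s hP
      exact (hl.sub hiP).sub_const (v - inv₀ (P v))
    have hF : ∀ s : ℝ, HasDerivAt
        (fun s : ℝ => (B * K) * d * α * s + (B * K) * d * (β - α) / 2 * s ^ 2)
        ((B * K) * d * α + (B * K) * d * (β - α) * s) s := by
      intro s
      have hp : HasDerivAt (fun s : ℝ => s ^ 2) (2 * s) s := by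
        simpa using hasDerivAt_pow 2 s
      have := ((hasDerivAt_id s).const_mul ((B * K) * d * α)).add
        (hp.const_mul ((B * K) * d * (β - α) / 2))
      convert this using 1
      all_goals first | rfl | ring
    have bound : ∀ s ∈ Set.Ico (0:ℝ) 1,
        ‖g' s‖ ≤ (B * K) * d * α + (B * K) * d * (β - α) * s := by
      intro s hs
      have hsI : s ∈ Set.Icc (0:ℝ) 1 := ⟨hs.1, le_of_lt hs.2⟩
      have hrw : g' s = inv₀ ((P' x₀ - P' (ℓ s)) (u - v)) := by
        simp only [hg', ContinuousLinearMap.sub_apply, map_sub, hinvl]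
        abel
      have h1 : ‖P' x₀ - P' (ℓ s)‖ ≤ K * ‖x₀ - ℓ s‖ := hK x₀ hx₀ (ℓ s) (hmemD s hsI)
      have h2 : ‖x₀ - ℓ s‖ ≤ (1 - s) * α + s * β := by
        rw [norm_sub_rev]; exact hnorm s hsI
      have h3 : ‖P' x₀ - P' (ℓ s)‖ ≤ K * ((1 - s) * α + s * β) :=
        h1.trans (mul_le_mul_of_nonneg_left h2 hK0)
      calc ‖g' s‖ = ‖inv₀ ((P' x₀ - P' (ℓ s)) (u - v))‖ := by rw [hrw]
        _ ≤ ‖inv₀‖ * ‖(P' x₀ - P' (ℓ s)) (u - v)‖ := inv₀.le_opNorm _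
        _ ≤ ‖inv₀‖ * (‖P' x₀ - P' (ℓ s)‖ * d) :=
            mul_le_mul_of_nonneg_left ((P' x₀ - P' (ℓ s)).le_opNorm _) (norm_nonneg _)
        _ ≤ B * (K * ((1 - s) * α + s * β) * d) :=
            mul_le_mul hB (mul_le_mul_of_nonneg_right h3 (norm_nonneg _))
              (by positivity) hB0
        _ = (B * K) * d * α + (B * K) * d * (β - α) * s := by ring
    have hg0 : g 0 = 0 := by
      have hl0 : ℓ 0 = v := by simp [hℓ]
      simp [hg, hl0]
    have mainest := image_norm_le_of_norm_deriv_right_le_deriv_boundary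
      (f := g) (f' := g') (a := 0) (b := 1)
      (fun s hs => (hgd s hs).continuousAt.continuousWithinAt)
      (fun s hs => (hgd s ⟨hs.1, le_of_lt hs.2⟩).hasDerivWithinAt)
      (B := fun s => (B * K) * d * α * s + (B * K) * d * (β - α) / 2 * s ^ 2)
      (B' := fun s => (B * K) * d * α + (B * K) * d * (β - α) * s)
      (by rw [hg0]; simp) hF bound
    have h1 : ‖g 1‖ ≤ (B * K) * d * α * 1 + (B * K) * d * (β - α) / 2 * 1 ^ 2 :=
      mainest (Set.mem_Icc.mpr ⟨zero_le_one, le_refl 1⟩)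
    have hg1 : g 1 = (u - inv₀ (P u)) - (v - inv₀ (P v)) := by
      have hl1 : ℓ 1 = u := by simp [hℓ]
      simp [hg, hl1]
    rw [hg1] at h1
    calc ‖(u - inv₀ (P u)) - (v - inv₀ (P v))‖
        ≤ (B * K) * d * α * 1 + (B * K) * d * (β - α) / 2 * 1 ^ 2 := h1
      _ = (B * K) * ((α + β) / 2) * d := by ring
  -- majorant sequence and iterates
  set t : ℕ → ℝ := kantMaj η (B * K) with htdef
  set x : ℕ → X := kantIter (fun z => z - inv₀ (P z)) x₀ with hxdef
  have ht0 : t 0 = 0 := kantMaj_zero η (B * K)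
  have hts : ∀ n, t (n + 1) = η + (B * K) * (t n) ^ 2 / 2 := kantMaj_succ η (B * K)
  have hx0 : x 0 = x₀ := kantIter_zero _ x₀
  have hxsucc : ∀ n, x (n + 1) = x n - inv₀ (P (x n)) := kantIter_succ _ x₀
  have htnn : ∀ n, 0 ≤ t n := by
    intro n
    induction n with
    | zero => rw [ht0]
    | succ n ih => rw [hts]; positivity
  have htle : ∀ n, t n ≤ 2 * η := by
    intro n
    induction n with
    | zero => rw [ht0]; positivity
    | succ n ih =>
      rw [hts]
      nlinarith [htnn n]
  have htmono : ∀ n, t n ≤ t (n + 1) := by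
    intro n
    induction n with
    | zero => rw [ht0, hts 0, ht0]; positivity
    | succ n ih =>
      rw [hts n, hts (n + 1)]
      nlinarith [htnn n, htnn (n + 1), mul_self_le_mul_self (htnn n) ih]
  have main : ∀ n, ‖x (n + 1) - x n‖ ≤ t (n + 1) - t n ∧ ‖x n - x₀‖ ≤ t n := by
    intro n
    induction n with
    | zero =>
      constructor
      · have hdiff : x (0 + 1) - x 0 = -(inv₀ (P x₀)) := by
          rw [hxsucc 0, hx0]; abel
        rw [hdiff, norm_neg, hts 0, ht0]
        nlinarith [hη]
      · rw [hx0, ht0]; simp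
    | succ n ih =>
      have hxn : ‖x n - x₀‖ ≤ t n := ih.2
      have hxn1 : ‖x (n + 1) - x₀‖ ≤ t (n + 1) := by
        calc ‖x (n + 1) - x₀‖ ≤ ‖x (n + 1) - x n‖ + ‖x n - x₀‖ := by
              simpa using norm_add_le (x (n + 1) - x n) (x n - x₀)
          _ ≤ (t (n + 1) - t n) + t n := add_le_add ih.1 hxn
          _ = t (n + 1) := by ring
      refine ⟨?_, hxn1⟩
      have hmemn : x n ∈ Metric.closedBall x₀ (2 * η) :=
        Metric.mem_closedBall.mpr (by rw [dist_eq_norm]; exact hxn.trans (htle n))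
      have hmemn1 : x (n + 1) ∈ Metric.closedBall x₀ (2 * η) :=
        Metric.mem_closedBall.mpr (by rw [dist_eq_norm]; exact hxn1.trans (htle (n + 1)))
      have hk := key (x (n + 1)) (x n) hmemn1 hmemn
      rw [← hxsucc (n + 1), ← hxsucc n] at hk
      refine hk.trans ?_
      have e1 : (B * K) * ((‖x n - x₀‖ + ‖x (n + 1) - x₀‖) / 2) * ‖x (n + 1) - x n‖ ≤
          (B * K) * ((t n + t (n + 1)) / 2) * (t (n + 1) - t n) := by
        refine mul_le_mul ?_ ih.1 (norm_nonneg _) ?_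
        · refine mul_le_mul_of_nonneg_left ?_ (le_of_lt hcpos)
          have := add_le_add hxn hxn1
          linarith
        · have := htnn n
          have := htnn (n + 1)
          positivity
      refine e1.trans (le_of_eq ?_)
      rw [hts (n + 1), hts n]
      ring
  -- Cauchy sequence and its limit
  have hsummable : Summable (fun n => t (n + 1) - t n) := by
    refine summable_of_sum_range_le (c := 2 * η) (fun n => by linarith [htmono n]) ?_
    intro n
    rw [Finset.sum_range_sub (f := t), ht0]
    linarith [htle n]
  have hcauchy : CauchySeq x := by
    refine cauchySeq_of_dist_le_of_summable (fun n => t (n + 1) - t n) ?_ hsummable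
    intro n
    rw [dist_eq_norm, norm_sub_rev]
    exact (main n).1
  obtain ⟨xs, hxslim⟩ := cauchySeq_tendsto_of_complete hcauchy
  have hxmem : ∀ n, x n ∈ Metric.closedBall x₀ (2 * η) := fun n =>
    Metric.mem_closedBall.mpr (by rw [dist_eq_norm]; exact (main n).2.trans (htle n))
  have hxsmem : xs ∈ Metric.closedBall x₀ (2 * η) :=
    Metric.isClosed_closedBall.mem_of_tendsto hxslim (Filter.Eventually.of_forall hxmem)
  have hxsD : xs ∈ D₀ := hball hxsmem
  -- fixed point
  have hTc : ContinuousAt (fun z => z - inv₀ (P z)) xs := by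
    have hPc : ContinuousAt P xs := (hderiv xs hxsD).continuousAt
    exact continuousAt_id.sub (inv₀.continuous.continuousAt.comp hPc)
  have hlim1 : Filter.Tendsto (fun n => x (n + 1)) Filter.atTop (nhds xs) :=
    hxslim.comp (Filter.tendsto_add_atTop_nat 1)
  have hlim2 : Filter.Tendsto (fun n => x n - inv₀ (P (x n))) Filter.atTop
      (nhds (xs - inv₀ (P xs))) := hTc.tendsto.comp hxslim
  have hfix : xs - inv₀ (P xs) = xs := by
    have heq : (fun n => x (n + 1)) = fun n => x n - inv₀ (P (x n)) := funext hxsucc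
    rw [heq] at hlim1
    exact tendsto_nhds_unique hlim2 hlim1
  have hinvP0 : inv₀ (P xs) = 0 := sub_eq_self.mp hfix
  have hPxs : P xs = 0 := by
    have := hinvr (P xs)
    rw [hinvP0] at this
    simpa using this.symm
  -- distance from the first iterate
  have chain : ∀ n m, ‖x (n + m) - x n‖ ≤ t (n + m) - t n := by
    intro n m
    induction m with
    | zero => simp
    | succ m ih =>
      calc ‖x (n + (m + 1)) - x n‖
          ≤ ‖x (n + m + 1) - x (n + m)‖ + ‖x (n + m) - x n‖ := by
            rw [show n + (m + 1) = n + m + 1 from by omega]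
            simpa using norm_add_le (x (n + m + 1) - x (n + m)) (x (n + m) - x n)
        _ ≤ (t (n + m + 1) - t (n + m)) + (t (n + m) - t n) :=
            add_le_add (main (n + m)).1 ih
        _ = t (n + (m + 1)) - t n := by
            rw [show n + (m + 1) = n + m + 1 from by omega]; ring
  have ht1 : t 1 = η := by rw [hts 0, ht0]; ring
  have htbd : ∀ m, t (m + 1) ≤ η + 2 * η * h := by
    intro m
    rw [hts m]
    nlinarith [htle m, htnn m, mul_le_mul_of_nonneg_left
      (pow_le_pow_left₀ (htnn m) (htle m) 2) (le_of_lt hcpos)]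
  have hbound : ∀ m, ‖x (m + 1) - x 1‖ ≤ 2 * η * h := by
    intro m
    have hcm := chain 1 m
    rw [show 1 + m = m + 1 from by omega, ht1] at hcm
    linarith [htbd m]
  have hx1 : x 1 = x₀ - inv₀ (P x₀) := by rw [hxsucc 0, hx0]
  have hlim3 : Filter.Tendsto (fun m => ‖x (m + 1) - x 1‖) Filter.atTop
      (nhds ‖xs - x 1‖) := (Filter.Tendsto.sub hlim1 tendsto_const_nhds).norm
  have hfinal : ‖xs - x 1‖ ≤ 2 * η * h :=
    le_of_tendsto hlim3 (Filter.Eventually.of_forall hbound)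
  refine ⟨xs, hPxs, ?_, ?_⟩
  · simpa [dist_eq_norm] using Metric.mem_closedBall.mp hxsmem
  · rw [← hx1]; exact hfinal
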